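/- Let A be an m×n SSR(ε) matrix, let x ∈ ℝ^n be nonzero with Ax ≠ 0 and S^+(Ax) = S^-(x) = r for some 0 ≤ r ≤ min{m,n} − 1. Then the sign of the first nonzero component of Ax (or, if the first component is zero, the unique sign assigned to it in any maximizing completion determining S^+(Ax)) equals ε_r·ε_{r+1} times the sign of the first nonzero component of x (with the convention ε_0 := 1). -/

import Mathlib

open Matrix Filter

/-- Number of sign changes in a list of reals (consecutive pairs with negative product). -/
noncomputable def signChanges (l : List ℝ) : ℕ :=
  (l.zip l.tail).countP (fun p => decide (p.1 * p.2 < 0))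

/-- `S^-(v)`: sign changes of the coordinates of `v` after discarding zero entries. -/
noncomputable def Sm {n : ℕ} (v : Fin n → ℝ) : ℕ :=
  signChanges ((List.ofFn v).filter (fun x => decide (x ≠ 0)))

/-- `S^+(v)`: maximal number of sign changes over all ±1 completions of the zero
entries of `v`, with the convention `S^+(0) = n`. -/
noncomputable def Sp {n : ℕ} (v : Fin n → ℝ) : ℕ :=
  if v = 0 then n
  else Finset.univ.sup (fun σ : Fin n → Bool =>
    signChanges (List.ofFn (fun i => if v i = 0 then (if σ i then (1:ℝ) else -1) else v i)))

/-- First nonzero entry of a vector (`0` if the vector is zero). -/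
noncomputable def firstNz {n : ℕ} (v : Fin n → ℝ) : ℝ :=
  ((List.ofFn v).filter (fun x => decide (x ≠ 0))).headI

/-- `A` is strictly sign regular with sign pattern `ε`:
every `r × r` minor (`1 ≤ r ≤ min m n`) is nonzero with sign `ε r`. -/
def ssrPattern {m n : ℕ} (A : Matrix (Fin m) (Fin n) ℝ) (ε : ℕ → ℝ) : Prop :=
  ∀ r : ℕ, 1 ≤ r → r ≤ min m n → ∀ (f : Fin r → Fin m) (g : Fin r → Fin n),
    StrictMono f → StrictMono g → 0 < ε r * (A.submatrix f g).det

/-- `A` is sign regular with sign pattern `ε`: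
every nonzero `r × r` minor (`1 ≤ r ≤ min m n`) has sign `ε r`. -/
def srPattern {m n : ℕ} (A : Matrix (Fin m) (Fin n) ℝ) (ε : ℕ → ℝ) : Prop :=
  ∀ r : ℕ, 1 ≤ r → r ≤ min m n → ∀ (f : Fin r → Fin m) (g : Fin r → Fin n),
    StrictMono f → StrictMono g → 0 ≤ ε r * (A.submatrix f g).det

/-- The map `f` picks out consecutive indices. -/
def Contig {r m : ℕ} (f : Fin r → Fin m) : Prop :=
  ∃ a : ℕ, ∀ i : Fin r, (f i : ℕ) = a + (i : ℕ)

@[simp] lemma sc_nil : signChanges [] = 0 := rfl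
@[simp] lemma sc_singleton (a : ℝ) : signChanges [a] = 0 := rfl

lemma sc_cons_cons (a b : ℝ) (t : List ℝ) :
    signChanges (a :: b :: t) = signChanges (b :: t) + (if a * b < 0 then 1 else 0) := by
  simp [signChanges, List.countP_cons]

lemma sc_le_cons (a : ℝ) (l : List ℝ) : signChanges l ≤ signChanges (a :: l) := by
  cases l with
  | nil => simp
  | cons b t => rw [sc_cons_cons]; omega

lemma sc_cons_le (a : ℝ) (l : List ℝ) : signChanges (a :: l) ≤ signChanges l + 1 := by
  cases l with
  | nil => simp
  | cons b t => rw [sc_cons_cons]; split <;> omega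

lemma sign_rel {a b : ℝ} (ha : a ≠ 0) (hb : b ≠ 0) :
    Real.sign a = (if a * b < 0 then -1 else 1) * Real.sign b := by
  rcases lt_trichotomy a 0 with h|h|h
  · rcases lt_trichotomy b 0 with h'|h'|h'
    · rw [Real.sign_of_neg h, Real.sign_of_neg h', if_neg (by nlinarith)]; ring
    · exact absurd h' hb
    · rw [Real.sign_of_neg h, Real.sign_of_pos h', if_pos (by nlinarith)]; ring
  · exact absurd h ha
  · rcases lt_trichotomy b 0 with h'|h'|h'
    · rw [Real.sign_of_pos h, Real.sign_of_neg h', if_pos (by nlinarith)]; ring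
    · exact absurd h' hb
    · rw [Real.sign_of_pos h, Real.sign_of_pos h', if_neg (by nlinarith)]; ring

lemma inv_cons {a b : ℝ} (t : List ℝ) (ha : a ≠ 0) (hb : b ≠ 0) :
    Real.sign a * (-1 : ℝ) ^ (signChanges (a :: b :: t)) =
      Real.sign b * (-1 : ℝ) ^ (signChanges (b :: t)) := by
  rw [sc_cons_cons, sign_rel ha hb]
  split <;> simp [pow_add] <;> ring

noncomputable abbrev fil (l : List ℝ) : List ℝ := l.filter (fun x => decide (x ≠ 0))

lemma fil_cons_ne {a : ℝ} (ha : a ≠ 0) (l : List ℝ) : fil (a :: l) = a :: fil l := by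
  simp [fil, List.filter_cons, ha]

lemma fil_cons_zero {a : ℝ} (ha : a = 0) (l : List ℝ) : fil (a :: l) = fil l := by
  simp [fil, List.filter_cons, ha]

lemma mem_fil_ne_zero {z : ℝ} {l : List ℝ} (h : z ∈ fil l) : z ≠ 0 := by
  simpa using (List.mem_filter.mp h).2

lemma lemA (M : List ℝ) (k : ℕ) :
    signChanges (fil (M.drop k)) ≤ signChanges (fil M) := by
  induction M generalizing k with
  | nil => simp
  | cons a M' ih =>
    cases k with
    | zero => simp
    | succ j =>
      refine le_trans (by simpa using ih j) ?_
      by_cases ha : a = 0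
      · rw [fil_cons_zero ha]
      · rw [fil_cons_ne ha]; exact sc_le_cons _ _

lemma lemA2 (M : List ℝ) {k k' : ℕ} (h : k ≤ k') :
    signChanges (fil (M.drop k')) ≤ signChanges (fil (M.drop k)) := by
  have : M.drop k' = (M.drop k).drop (k' - k) := by
    rw [List.drop_drop]; congr 1; omega
  rw [this]; exact lemA _ _

lemma lemB (M : List ℝ) (k : ℕ) (h : fil (M.drop k) ≠ []) :
    Real.sign ((fil M).headI) * (-1 : ℝ) ^ (signChanges (fil M)) =
      Real.sign ((fil (M.drop k)).headI) * (-1 : ℝ) ^ (signChanges (fil (M.drop k))) := by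
  induction M generalizing k with
  | nil => simp at h
  | cons a M' ih =>
    cases k with
    | zero => simp
    | succ j =>
      simp only [List.drop_succ_cons] at h ⊢
      rw [← ih j h]
      by_cases ha : a = 0
      · rw [fil_cons_zero ha]
      · rw [fil_cons_ne ha]
        have hM' : fil M' ≠ [] := by
          intro hc
          rcases List.exists_mem_of_ne_nil _ h with ⟨z, hz⟩
          have : z ∈ fil M' := by
            have hz' := List.mem_filter.mp hz
            exact List.mem_filter.mpr ⟨(M'.drop_subset j) hz'.1, hz'.2⟩
          rw [hc] at this; simp at this
        rcases List.exists_cons_of_ne_nil hM' with ⟨b, t, hbt⟩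
        have hb : b ≠ 0 := mem_fil_ne_zero (l := M') (by rw [hbt]; exact List.mem_cons_self)
        rw [hbt]
        simpa using inv_cons t ha hb

lemma lemC (M : List ℝ) (t : ℕ) (ht : t ≤ signChanges (fil M)) (h : fil M ≠ []) :
    ∃ k, ∃ hk : k < M.length, M.get ⟨k, hk⟩ ≠ 0 ∧ signChanges (fil (M.drop k)) = t := by
  induction M generalizing t with
  | nil => simp [fil] at h
  | cons a M' ih =>
    by_cases ha : a = 0
    · rw [fil_cons_zero ha] at ht h
      rcases ih t ht h with ⟨k, hk, h1, h2⟩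
      exact ⟨k + 1, by simpa using hk, by simpa using h1, by simpa using h2⟩
    · rw [fil_cons_ne ha] at ht
      by_cases hteq : t = signChanges (a :: fil M')
      · exact ⟨0, by simp, ha, by simp [fil_cons_ne ha, hteq]⟩
      · have ht' : t < signChanges (a :: fil M') := lt_of_le_of_ne ht hteq
        have hM' : fil M' ≠ [] := by
          intro hc; rw [hc] at ht'; simp at ht'
        have : t ≤ signChanges (fil M') := by
          have := sc_cons_le a (fil M'); omega
        rcases ih t this hM' with ⟨k, hk, h1, h2⟩
        exact ⟨k + 1, by simpa using hk, by simpa using h1, by simpa using h2⟩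

noncomputable def G {N : ℕ} (v : Fin N → ℝ) (j : ℕ) : ℕ :=
  signChanges (fil ((List.ofFn v).drop j))

lemma G_zero {N : ℕ} (v : Fin N → ℝ) : G v 0 = Sm v := by simp [G, Sm, fil]

lemma G_anti {N : ℕ} (v : Fin N → ℝ) {j j' : ℕ} (h : j ≤ j') : G v j' ≤ G v j :=
  lemA2 _ h

lemma G_le_Sm {N : ℕ} (v : Fin N → ℝ) (j : ℕ) : G v j ≤ Sm v := by
  rw [← G_zero]; exact G_anti v (Nat.zero_le j)

lemma drop_ofFn_cons {N : ℕ} (v : Fin N → ℝ) (j : Fin N) :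
    (List.ofFn v).drop j = v j :: (List.ofFn v).drop (j + 1) := by
  have hj : (j : ℕ) < (List.ofFn v).length := by simpa using j.isLt
  rw [List.drop_eq_getElem_cons hj]
  simp

lemma Vsign {N : ℕ} (v : Fin N → ℝ) (j : Fin N) (hj : v j ≠ 0) :
    Real.sign (firstNz v) * (-1 : ℝ) ^ (Sm v) = Real.sign (v j) * (-1 : ℝ) ^ (G v j) := by
  have hd := drop_ofFn_cons v j
  have hfd : fil ((List.ofFn v).drop j) = v j :: fil ((List.ofFn v).drop (j + 1)) := by
    rw [hd, fil_cons_ne hj]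
  have hne : fil ((List.ofFn v).drop (j : ℕ)) ≠ [] := by rw [hfd]; simp
  have := lemB (List.ofFn v) j hne
  simp only [G]
  rw [hfd] at this ⊢
  simpa [firstNz, Sm, fil] using this

lemma Vsurj {N : ℕ} (v : Fin N → ℝ) (t : ℕ) (ht : t ≤ Sm v) (hv : ∃ j, v j ≠ 0) :
    ∃ j : Fin N, v j ≠ 0 ∧ G v j = t := by
  have hne : fil (List.ofFn v) ≠ [] := by
    rcases hv with ⟨j0, hj0⟩
    intro hc
    have : v j0 ∈ fil (List.ofFn v) :=
      List.mem_filter.mpr ⟨by simp [List.mem_ofFn], by simpa using hj0⟩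
    rw [hc] at this; simp at this
  rcases lemC (List.ofFn v) t (by simpa [Sm, fil] using ht) hne with ⟨k, hk, h1, h2⟩
  have hkN : k < N := by simpa using hk
  refine ⟨⟨k, hkN⟩, ?_, h2⟩
  simpa using h1

noncomputable def Cmat {m n : ℕ} (A : Matrix (Fin m) (Fin n) ℝ) (x : Fin n → ℝ)
    (s : ℝ) (β : Fin n → ℕ) (r : ℕ) : Matrix (Fin m) (Fin (r + 1)) ℝ :=
  fun i t => ∑ j ∈ Finset.univ.filter (fun j => β j = (t : ℕ)),
    A i j * (s * (-1) ^ (t : ℕ) * x j)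

lemma minor_pos {m n r q : ℕ} (A : Matrix (Fin m) (Fin n) ℝ) (ε : ℕ → ℝ)
    (hε0 : ε 0 = 1) (hA : ssrPattern A ε) (x : Fin n → ℝ) (s : ℝ) (β : Fin n → ℕ)
    (hsg : ∀ j, x j ≠ 0 → s * (-1) ^ (β j) * x j = |x j|)
    (hmono : Monotone β)
    (hsurj : ∀ t, t ≤ r → ∃ j, x j ≠ 0 ∧ β j = t)
    (hq : q ≤ min m n)
    (f : Fin q → Fin m) (hf : StrictMono f)
    (τ : Fin q → Fin (r + 1)) (hτ : StrictMono τ) :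
    0 < ε q * ((Cmat A x s β r).submatrix f τ).det := by
  have e : ∀ (M : Matrix (Fin q) (Fin q) ℝ), M.det = Matrix.detRowAlternating M := fun _ => rfl
  rcases Nat.eq_zero_or_pos q with hq0 | hq1
  · subst hq0
    have : ((Cmat A x s β r).submatrix f τ).det = 1 := Matrix.det_fin_zero
    rw [this, hε0]; norm_num
  · have key : ((Cmat A x s β r).submatrix f τ).det
        = ∑ κ ∈ Fintype.piFinset
            (fun t : Fin q => Finset.univ.filter (fun j : Fin n => β j = ((τ t : ℕ)))),
          (∏ t, (s * (-1) ^ ((τ t : ℕ)) * x (κ t))) * (A.submatrix f κ).det := by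
      rw [← Matrix.det_transpose]
      have h1 : ((Cmat A x s β r).submatrix f τ)ᵀ =
          (fun t : Fin q =>
            ∑ j ∈ Finset.univ.filter (fun j : Fin n => β j = ((τ t : ℕ))),
              (fun k : Fin q => A (f k) j * (s * (-1) ^ ((τ t : ℕ)) * x j))) := by
        funext t k
        simp [Cmat, Matrix.transpose_apply, Matrix.submatrix_apply, Finset.sum_apply]
      rw [e, h1, ← AlternatingMap.coe_multilinearMap, MultilinearMap.map_sum_finset]
      simp only [AlternatingMap.coe_multilinearMap]
      refine Finset.sum_congr rfl (fun κ hκ => ?_)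
      have h2 : (Matrix.detRowAlternating
            (fun t => fun k : Fin q => A (f k) (κ t) * (s * (-1) ^ ((τ t : ℕ)) * x (κ t)))
          : ℝ)
          = Matrix.det (Matrix.of fun t k : Fin q =>
              (s * (-1) ^ ((τ t : ℕ)) * x (κ t)) * ((A.submatrix f κ)ᵀ t k)) := by
        rw [e]
        congr 1
        funext t k
        simp [Matrix.submatrix_apply, Matrix.transpose_apply]
        ring
      rw [h2, Matrix.det_mul_column, Matrix.det_transpose]
    have hpos : ∀ κ : Fin q → Fin n, (∀ t, β (κ t) = (τ t : ℕ)) → (∀ t, x (κ t) ≠ 0) →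
        0 < ε q * ((∏ t, (s * (-1) ^ ((τ t : ℕ)) * x (κ t))) * (A.submatrix f κ).det) := by
      intro κ hβκ hz
      have hκmono : StrictMono κ := by
        intro t t' htt'
        have h1 : (τ t : ℕ) < (τ t' : ℕ) := hτ htt'
        by_contra hle
        push_neg at hle
        have := hmono hle
        rw [hβκ t, hβκ t'] at this
        omega
      have hdet := hA q hq1 hq f κ hf hκmono
      have hcoef : 0 < ∏ t, (s * (-1) ^ ((τ t : ℕ)) * x (κ t)) := by
        apply Finset.prod_pos
        intro t _
        have h3 := hsg (κ t) (hz t)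
        rw [hβκ t] at h3
        rw [h3]
        exact abs_pos.mpr (hz t)
      have h4 := mul_pos hcoef hdet
      have h5 : ε q * ((∏ t, (s * (-1) ^ ((τ t : ℕ)) * x (κ t))) * (A.submatrix f κ).det)
          = (∏ t, (s * (-1) ^ ((τ t : ℕ)) * x (κ t))) * (ε q * (A.submatrix f κ).det) := by
        ring
      rw [h5]; exact h4
    rw [key, Finset.mul_sum]
    apply Finset.sum_pos'
    · intro κ hκ
      by_cases hz : ∀ t, x (κ t) ≠ 0
      · refine le_of_lt (hpos κ (fun t => ?_) hz)
        have := Fintype.mem_piFinset.mp hκ t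
        simpa using this
      · push_neg at hz
        rcases hz with ⟨t0, ht0⟩
        have : (∏ t, (s * (-1) ^ ((τ t : ℕ)) * x (κ t))) = 0 :=
          Finset.prod_eq_zero (Finset.mem_univ t0) (by rw [ht0]; ring)
        rw [this]; simp
    · have hex : ∀ t : Fin q, ∃ j, x j ≠ 0 ∧ β j = (τ t : ℕ) := fun t =>
        hsurj _ (Nat.lt_succ_iff.mp (τ t).isLt)
      choose κ0 hκ0a hκ0b using hex
      refine ⟨κ0, ?_, hpos κ0 hκ0b hκ0a⟩
      rw [Fintype.mem_piFinset]
      intro t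
      simp [hκ0b t]

lemma sq_neg_one_pow (e : ℕ) : ((-1 : ℝ) ^ e) * ((-1 : ℝ) ^ e) = 1 := by
  rw [← pow_add]
  exact Even.neg_one_pow ⟨e, rfl⟩

lemma sign_pm {a : ℝ} (ha : a ≠ 0) : Real.sign a = 1 ∨ Real.sign a = -1 := by
  rcases lt_trichotomy a 0 with h|h|h
  · right; exact Real.sign_of_neg h
  · exact absurd h ha
  · left; exact Real.sign_of_pos h

lemma firstNz_ne {N : ℕ} (v : Fin N → ℝ) (j : Fin N) (hj : v j ≠ 0) : firstNz v ≠ 0 := by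
  have hne : fil (List.ofFn v) ≠ [] := by
    intro hc
    have : v j ∈ fil (List.ofFn v) :=
      List.mem_filter.mpr ⟨by simp [List.mem_ofFn], by simpa using hj⟩
    rw [hc] at this; simp at this
  rcases List.exists_cons_of_ne_nil hne with ⟨b, t, hbt⟩
  have hb : b ≠ 0 := mem_fil_ne_zero (l := List.ofFn v) (by rw [hbt]; exact List.mem_cons_self)
  have : firstNz v = b := by rw [firstNz]; rw [show (List.ofFn v).filter (fun x => decide (x ≠ 0)) = b :: t from hbt]; rfl
  rw [this]; exact hb

lemma sgn_mul_abs (a : ℝ) : Real.sign a * |a| = a := by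
  rcases lt_trichotomy a 0 with h|h|h
  · rw [Real.sign_of_neg h, abs_of_neg h]; ring
  · simp [h]
  · rw [Real.sign_of_pos h, abs_of_pos h]; ring

lemma blockSign {N : ℕ} (v : Fin N → ℝ) (j : Fin N) (hj : v j ≠ 0) :
    Real.sign (firstNz v) * (-1 : ℝ) ^ (Sm v - G v ↑j) * v j = |v j| := by
  have hV := Vsign v j hj
  have hg : G v ↑j ≤ Sm v := G_le_Sm v ↑j
  have hfz : firstNz v ≠ 0 := firstNz_ne v j hj
  have hs2 : Real.sign (firstNz v) * Real.sign (firstNz v) = 1 := by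
    rcases sign_pm hfz with h|h <;> rw [h] <;> norm_num
  have h9 := sq_neg_one_pow (G v ↑j)
  have hsx : Real.sign (v j) = Real.sign (firstNz v) * ((-1:ℝ) ^ (Sm v) * (-1:ℝ) ^ (G v ↑j)) := by
    linear_combination (-((-1:ℝ) ^ (G v ↑j))) * hV - Real.sign (v j) * h9
  have h10 : (-1:ℝ) ^ (Sm v - G v ↑j) * ((-1:ℝ) ^ (Sm v) * (-1:ℝ) ^ (G v ↑j)) = 1 := by
    rw [← pow_add, ← pow_add]
    have he : (Sm v - G v ↑j) + (Sm v + G v ↑j) = 2 * Sm v := by omega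
    rw [he]
    exact Even.neg_one_pow ⟨Sm v, by ring⟩
  linear_combination (-(Real.sign (firstNz v)) * (-1:ℝ)^(Sm v - G v ↑j)) * (sgn_mul_abs (v j))
    + (Real.sign (firstNz v) * (-1:ℝ)^(Sm v - G v ↑j) * |v j|) * hsx
    + ((-1:ℝ)^(Sm v - G v ↑j) * (-1:ℝ)^(Sm v) * (-1:ℝ)^(G v ↑j) * |v j|) * hs2
    + |v j| * h10

set_option maxHeartbeats 2000000 in
theorem stmt4 {m n : ℕ} (A : Matrix (Fin m) (Fin n) ℝ) (ε : ℕ → ℝ)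
    (hε0 : ε 0 = 1) (hsv : ∀ r, ε r = 1 ∨ ε r = -1) (hA : ssrPattern A ε)
    (x : Fin n → ℝ) (hx : x ≠ 0) (hAx : A *ᵥ x ≠ 0) (r : ℕ)
    (hr : r ≤ min m n - 1) (h1 : Sp (A *ᵥ x) = r) (h2 : Sm x = r) :
    ∀ w : Fin m → ℝ, (∀ i, (A *ᵥ x) i ≠ 0 → w i = (A *ᵥ x) i) → (∀ i, w i ≠ 0) →
      Sm w = Sp (A *ᵥ x) →
      ∀ i0 : Fin m, (i0 : ℕ) = 0 →
        Real.sign (w i0) = ε r * ε (r + 1) * Real.sign (firstNz x) := by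
  intro w hw1 hw2 hw3 i0 hi0
  have hm : 0 < m := i0.pos
  obtain ⟨j0, hj0⟩ : ∃ j, x j ≠ 0 := Function.ne_iff.mp hx
  have hn : 0 < n := j0.pos
  have hr1 : r + 1 ≤ min m n := by
    have : 1 ≤ min m n := le_min hm hn
    omega
  set y : Fin m → ℝ := A *ᵥ x with hy
  have hSw : Sm w = r := by rw [hw3, h1]
  -- data for x
  set s : ℝ := Real.sign (firstNz x) with hsdef
  have hfnzx : firstNz x ≠ 0 := firstNz_ne x j0 hj0
  have hs1 : s = 1 ∨ s = -1 := sign_pm hfnzx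
  have hGx_le : ∀ j : ℕ, G x j ≤ r := fun j => by have := G_le_Sm x j; omega
  set βx : Fin n → ℕ := fun j => r - G x ↑j with hβxdef
  have hβxmono : Monotone βx := by
    intro j j' h
    exact Nat.sub_le_sub_left (G_anti x (show (j:ℕ) ≤ (j':ℕ) from h)) r
  have hsgx : ∀ j : Fin n, x j ≠ 0 → s * (-1:ℝ) ^ (βx j) * x j = |x j| := by
    intro j hj
    have := blockSign x j hj
    rw [h2] at this
    exact this
  have hsurjx : ∀ t, t ≤ r → ∃ j : Fin n, x j ≠ 0 ∧ βx j = t := by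
    intro t ht
    obtain ⟨j, hj, hGj⟩ := Vsurj x (r - t) (by omega) ⟨j0, hj0⟩
    exact ⟨j, hj, by simp only [hβxdef]; omega⟩
  -- data for w
  set sgn0 : ℝ := Real.sign (w ⟨0, hm⟩) with hsgn0def
  have hfnzw : firstNz w = w ⟨0, hm⟩ := by
    have hfil : (List.ofFn w).filter (fun z => decide (z ≠ 0)) = List.ofFn w := by
      apply List.filter_eq_self.mpr
      intro a ha
      have ha' : a ∈ Set.range w := by simpa [List.mem_ofFn] using ha
      rcases ha' with ⟨i, hi⟩
      simpa [← hi] using hw2 i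
    have hdr := drop_ofFn_cons w ⟨0, hm⟩
    simp only [Fin.val_mk, List.drop_zero] at hdr
    rw [firstNz, hfil, hdr]
    rfl
  have hsgn0pm : sgn0 = 1 ∨ sgn0 = -1 := sign_pm (hw2 _)
  have hGw_le : ∀ i : ℕ, G w i ≤ r := fun i => by have := G_le_Sm w i; omega
  have hsurjw : ∀ t, t ≤ r → ∃ i : Fin m, w i ≠ 0 ∧ r - G w ↑i = t := by
    intro t ht
    obtain ⟨i, hi, hGi⟩ := Vsurj w (r - t) (by omega) ⟨⟨0, hm⟩, hw2 _⟩
    exact ⟨i, hi, by omega⟩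
  choose fw hfw1 hfw2 using fun t : Fin (r + 1) =>
    hsurjw (t : ℕ) (Nat.lt_succ_iff.mp t.isLt)
  set f : Fin (r + 1) → Fin m := fun t => if t = 0 then ⟨0, hm⟩ else fw t with hfdef
  have hβwf : ∀ t : Fin (r + 1), r - G w ↑(f t) = (t : ℕ) := by
    intro t
    by_cases h : t = 0
    · simp only [hfdef, h, if_pos rfl]
      have : G w ↑(⟨0, hm⟩ : Fin m) = r := by
        simp only [Fin.val_mk]
        rw [G_zero, hSw]
      simp [this, h]
    · simp only [hfdef, if_neg h]
      exact hfw2 t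
  have hfmono : StrictMono f := by
    intro t t' h
    have h1' : (t : ℕ) < (t' : ℕ) := h
    have e1 := hβwf t
    have e2 := hβwf t'
    have hlt : G w ↑(f t') < G w ↑(f t) := by
      have g1 := hGw_le ↑(f t)
      have g2 := hGw_le ↑(f t')
      omega
    by_contra hc
    push_neg at hc
    have := G_anti w (show (↑(f t') : ℕ) ≤ ↑(f t) from hc)
    omega
  have hsgwf : ∀ t : Fin (r + 1), sgn0 * (-1:ℝ) ^ (t : ℕ) * w (f t) = |w (f t)| := by
    intro t
    have := blockSign w (f t) (hw2 _)
    rw [hSw, hβwf t, hfnzw] at this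
    exact this
  -- the matrix C and its column expansion of y
  have hs2 : s * s = 1 := by rcases hs1 with h|h <;> rw [h] <;> norm_num
  have hyC : ∀ i, y i = ∑ t : Fin (r + 1), (s * (-1:ℝ) ^ (t : ℕ)) * Cmat A x s βx r i t := by
    intro i
    have hψ : ∀ j : Fin n, βx j < r + 1 := fun j => by
      have := hGx_le ↑j
      simp only [hβxdef]
      omega
    have hfib := Finset.sum_fiberwise (Finset.univ : Finset (Fin n))
      (fun j => (⟨βx j, hψ j⟩ : Fin (r + 1))) (fun j => A i j * x j)
    have hyi : y i = ∑ j, A i j * x j := by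
      simp [hy, Matrix.mulVec, dotProduct]
    rw [hyi, ← hfib]
    refine Finset.sum_congr rfl (fun t _ => ?_)
    rw [Cmat, Finset.mul_sum]
    refine Finset.sum_congr (by ext j; simp [Fin.ext_iff]) (fun j hj => ?_)
    have h9 := sq_neg_one_pow (t : ℕ)
    linear_combination (-(A i j * x j)) * h9
      + (-(A i j * x j * ((-1:ℝ)^(t:ℕ) * (-1:ℝ)^(t:ℕ)))) * hs2
  set B : Matrix (Fin (r + 1)) (Fin (r + 1)) ℝ := (Cmat A x s βx r).submatrix f id with hBdef
  have hdetB : 0 < ε (r + 1) * B.det :=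
    minor_pos A ε hε0 hA x s βx hsgx hβxmono hsurjx hr1 f hfmono id strictMono_id
  set M0 : Matrix (Fin (r + 1)) (Fin (r + 1)) ℝ := B.updateCol 0 (fun k => y (f k)) with hM0def
  have hM0det : M0.det = s * B.det := by
    have hcol : (fun k => y (f k)) =
        ∑ t : Fin (r + 1), (s * (-1:ℝ) ^ (t : ℕ)) • (fun k : Fin (r+1) => B k t) := by
      funext k
      rw [hyC (f k)]
      simp [Finset.sum_apply, hBdef, Matrix.submatrix_apply, smul_eq_mul]
    have e1 : M0.det = Matrix.cramer B (fun k => y (f k)) 0 := by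
      rw [Matrix.cramer_apply, hM0def]
    rw [e1, hcol, map_sum]
    have e2 : ∀ t : Fin (r+1), Matrix.cramer B ((s * (-1:ℝ) ^ (t : ℕ)) • (fun k : Fin (r+1) => B k t))
        = (s * (-1:ℝ) ^ (t : ℕ)) • (Pi.single t B.det : Fin (r+1) → ℝ) := by
      intro t
      rw [LinearMap.map_smul, Matrix.cramer_row_self B _ t (fun j => rfl)]
    simp only [e2]
    rw [Finset.sum_apply]
    simp [Pi.single_apply]
  have hDk : ∀ k : Fin (r + 1),
      0 < ε r * ((Cmat A x s βx r).submatrix (f ∘ k.succAbove) Fin.succ).det := by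
    intro k
    exact minor_pos A ε hε0 hA x s βx hsgx hβxmono hsurjx (by omega)
      (f ∘ k.succAbove) (hfmono.comp (Fin.strictMono_succAbove k))
      Fin.succ Fin.strictMono_succ
  have hcof : M0.det = ∑ k : Fin (r + 1),
      (-1:ℝ) ^ (k : ℕ) * y (f k) *
        ((Cmat A x s βx r).submatrix (f ∘ k.succAbove) Fin.succ).det := by
    rw [Matrix.det_succ_column_zero M0]
    refine Finset.sum_congr rfl (fun k _ => ?_)
    have e1 : M0 k 0 = y (f k) := Matrix.updateCol_self
    have e2 : M0.submatrix k.succAbove Fin.succ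
        = (Cmat A x s βx r).submatrix (f ∘ k.succAbove) Fin.succ := by
      ext a b
      simp only [Matrix.submatrix_apply, hM0def]
      rw [Matrix.updateCol_ne (Fin.succ_ne_zero b), hBdef]
      rfl
    rw [e1, e2]
  have hNonneg : 0 ≤ (sgn0 * ε r) * M0.det := by
    rw [hcof, Finset.mul_sum]
    apply Finset.sum_nonneg
    intro k _
    by_cases hyk : y (f k) = 0
    · rw [hyk]; ring_nf; simp
    · have hwk := hw1 (f k) hyk
      have hsg := hsgwf k
      rw [hwk] at hsg
      have h5 : sgn0 * ε r * ((-1:ℝ) ^ (k : ℕ) * y (f k) *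
          ((Cmat A x s βx r).submatrix (f ∘ k.succAbove) Fin.succ).det)
          = |y (f k)| * (ε r * ((Cmat A x s βx r).submatrix (f ∘ k.succAbove) Fin.succ).det) := by
        rw [← hsg]; ring
      rw [h5]
      exact mul_nonneg (abs_nonneg _) (le_of_lt (hDk k))
  have hi0eq : i0 = ⟨0, hm⟩ := Fin.ext hi0
  rw [hi0eq, ← hsgn0def]
  rw [hM0det] at hNonneg
  rcases hsv r with e1|e1 <;> rcases hsv (r+1) with e2|e2 <;>
    rcases hs1 with e3|e3 <;> rcases hsgn0pm with e4|e4 <;>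
    simp only [e1, e2, e3, e4] at hNonneg hdetB ⊢ <;>
    first
      | (norm_num; done)
      | (exfalso; nlinarith [hNonneg, hdetB])
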